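/- Let q be a unital quantum channel on M_n. Then q is an isometry for the GNS norm, i.e. Matrix.trace (q(A)ᴴ * q(A)) = Matrix.trace (Aᴴ * A) for all A ∈ M_n, if and only if q is a *-automorphism of M_n, i.e. q is bijective and q(A * B) = q(A) * q(B) for all A, B ∈ M_n (and then automatically q(Aᴴ) = q(A)ᴴ). -/

import Mathlib

open Matrix

lemma aux_trace_zero {m n : Type*} [Fintype m] [Fintype n] (B : Matrix m n ℂ)
    (h : Matrix.trace (Bᴴ * B) = 0) : B = 0 := by
  have key : Matrix.trace (Bᴴ * B) = ((∑ j, ∑ i, Complex.normSq (B i j) : ℝ) : ℂ) := by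
    push_cast
    simp [Matrix.trace, Matrix.diag, Matrix.mul_apply, Matrix.conjTranspose_apply,
      Complex.normSq_eq_conj_mul_self]
  rw [key] at h
  norm_cast at h
  have h2 : ∀ j ∈ Finset.univ, ∀ i ∈ (Finset.univ : Finset m), Complex.normSq (B i j) = 0 := by
    have := (Finset.sum_eq_zero_iff_of_nonneg (fun j _ => Finset.sum_nonneg
      (fun i _ => Complex.normSq_nonneg _))).mp h
    intro j hj i hi
    exact (Finset.sum_eq_zero_iff_of_nonneg (fun i _ => Complex.normSq_nonneg _)).mp (this j hj) i hi
  ext i j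
  simpa using Complex.normSq_eq_zero.mp (h2 j (Finset.mem_univ _) i (Finset.mem_univ _))

lemma polar_aux (M : Type*) [AddCommGroup M] [Module ℂ M] [NoZeroSMulDivisors ℂ M]
    (t2 t3 s2 s3 : M)
    (E1 : t2 + t3 = s2 + s3)
    (E2 : Complex.I • t2 - Complex.I • t3 = Complex.I • s2 - Complex.I • s3) :
    t2 = s2 := by
  have E2' : t2 - t3 = s2 - s3 := by
    have h := congrArg (fun x => (-Complex.I) • x) E2
    simpa [smul_sub, smul_smul, neg_mul, Complex.I_mul_I] using h
  have h4 : (t2 + t3) + (t2 - t3) = (s2 + s3) + (s2 - s3) := by rw [E1, E2']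
  have h5 : (2:ℂ) • t2 = (2:ℂ) • s2 := by
    rw [two_smul, two_smul]; abel_nf at h4 ⊢; convert h4 using 2
  exact smul_right_injective M two_ne_zero h5

set_option maxHeartbeats 2000000 in
/-- Theorem `represent`, part 1: a unital quantum channel `q` on `Mₙ` is an
isometry for the GNS norm if and only if it is a `*`-automorphism of `Mₙ` (bijective and
multiplicative; adjoint-preservation is then automatic). -/
theorem representing_map_unitary_iff_automorphism
    (n p : ℕ)
    (q : Matrix (Fin n) (Fin n) ℂ → Matrix (Fin n) (Fin n) ℂ)
    (qk : Fin p → Matrix (Fin n) (Fin n) ℂ)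
    (hq : ∀ A, q A = ∑ k, qk k * A * (qk k)ᴴ)
    (hq_unital : ∑ k, qk k * (qk k)ᴴ = 1)
    (hq_tp : ∑ k, (qk k)ᴴ * qk k = 1) :
    (∀ A : Matrix (Fin n) (Fin n) ℂ,
        Matrix.trace ((q A)ᴴ * q A) = Matrix.trace (Aᴴ * A))
      ↔ (Function.Bijective q ∧ ∀ A B, q (A * B) = q A * q B) := by
  have hadd : ∀ A B, q (A + B) = q A + q B := by
    intro A B
    simp [hq, Matrix.mul_add, Matrix.add_mul, Finset.sum_add_distrib]
  have hsmul : ∀ (c : ℂ) A, q (c • A) = c • q A := by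
    intro c A
    simp [hq, Matrix.mul_smul, Matrix.smul_mul, Finset.smul_sum]
  have hstar : ∀ A, (q A)ᴴ = q Aᴴ := by
    intro A
    simp [hq, conjTranspose_sum, conjTranspose_mul, Matrix.mul_assoc]
  have htr : ∀ M, Matrix.trace (q M) = Matrix.trace M := by
    intro M
    rw [hq, trace_sum]
    have h1 : ∀ k, Matrix.trace (qk k * M * (qk k)ᴴ) = Matrix.trace ((qk k)ᴴ * qk k * M) := by
      intro k
      rw [trace_mul_cycle, Matrix.mul_assoc, ← Matrix.mul_assoc]
    rw [Finset.sum_congr rfl (fun k _ => h1 k), ← trace_sum, ← Finset.sum_mul, hq_tp,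
      Matrix.one_mul]
  constructor
  · intro hiso
    -- block matrix representation
    obtain ⟨v, hvdef⟩ : ∃ v : Matrix (Fin n) (Fin n × Fin p) ℂ,
        v = fun i jk => qk jk.2 i jk.1 := ⟨_, rfl⟩
    have hv : v * vᴴ = 1 := by
      rw [← hq_unital]
      ext i j
      simp only [mul_apply, conjTranspose_apply, Matrix.sum_apply]
      simp only [mul_apply, conjTranspose_apply, Matrix.sum_apply, hvdef,
        Fintype.sum_prod_type, Matrix.mul_apply]
      rw [Finset.sum_comm]
    have hrep : ∀ M : Matrix (Fin n) (Fin n) ℂ,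
        q M = v * blockDiagonal (fun _ : Fin p => M) * vᴴ := by
      intro M
      rw [hq]
      ext i j
      simp only [Matrix.sum_apply, Matrix.mul_apply, conjTranspose_apply]
      simp only [Matrix.sum_apply, Matrix.mul_apply, conjTranspose_apply, hvdef,
        Fintype.sum_prod_type, blockDiagonal_apply, Finset.mul_sum, Finset.sum_mul,
        mul_ite, ite_mul, mul_zero, zero_mul, Finset.sum_ite_eq', Finset.mem_univ, if_true]
      rw [Finset.sum_comm]
    -- Schwarz equality
    have key : ∀ A, q (Aᴴ * A) = (q A)ᴴ * q A := by
      intro A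
      obtain ⟨Y, hY⟩ : ∃ Y : Matrix (Fin n × Fin p) (Fin n) ℂ,
          Y = blockDiagonal (fun _ : Fin p => A) * vᴴ := ⟨_, rfl⟩
      obtain ⟨P, hPdef⟩ : ∃ P : Matrix (Fin n × Fin p) (Fin n × Fin p) ℂ,
          P = 1 - vᴴ * v := ⟨_, rfl⟩
      have hq1 : q (Aᴴ * A) = Yᴴ * Y := by
        rw [hrep, hY, conjTranspose_mul, conjTranspose_conjTranspose,
          blockDiagonal_conjTranspose]
        rw [show (blockDiagonal fun _ : Fin p => Aᴴ * A)
            = blockDiagonal (fun _ : Fin p => Aᴴ) * blockDiagonal (fun _ : Fin p => A) from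
          blockDiagonal_mul _ _]
        simp only [Matrix.mul_assoc]
      have hq2 : q A = v * Y := by rw [hrep, hY, Matrix.mul_assoc]
      have hidem : vᴴ * v * (vᴴ * v) = vᴴ * v := by
        rw [Matrix.mul_assoc, ← Matrix.mul_assoc v vᴴ v, hv, Matrix.one_mul]
      have hPH : Pᴴ = P := by
        rw [hPdef]
        simp [conjTranspose_mul]
      have hPP : P * P = P := by
        rw [hPdef, Matrix.sub_mul, Matrix.mul_sub, Matrix.mul_sub]
        simp only [Matrix.mul_one, Matrix.one_mul]
        rw [hidem]
        abel
      have hD : q (Aᴴ * A) - (q A)ᴴ * q A = (P * Y)ᴴ * (P * Y) := by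
        rw [hq1, hq2, conjTranspose_mul v Y, conjTranspose_mul P Y, hPH]
        rw [Matrix.mul_assoc Yᴴ P (P * Y), ← Matrix.mul_assoc P P Y, hPP]
        rw [hPdef, Matrix.sub_mul, Matrix.one_mul, Matrix.mul_sub]
        rw [Matrix.mul_assoc vᴴ v Y, ← Matrix.mul_assoc Yᴴ vᴴ (v * Y)]
      have htr0 : Matrix.trace ((P * Y)ᴴ * (P * Y)) = 0 := by
        rw [← hD, trace_sub, htr, hiso A, sub_self]
      have hPY : P * Y = 0 := aux_trace_zero _ htr0
      rw [hPY, Matrix.mul_zero, sub_eq_zero] at hD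
      exact hD
    -- polarization
    have key2 : ∀ A B, q (Aᴴ * B) = (q A)ᴴ * q B := by
      intro A B
      have hAB := key (A + B)
      have hAiB := key (A + Complex.I • B)
      rw [hadd, conjTranspose_add, Matrix.add_mul, Matrix.mul_add, Matrix.mul_add,
        hadd, hadd, hadd, key A, key B, conjTranspose_add, Matrix.add_mul,
        Matrix.mul_add, Matrix.mul_add] at hAB
      rw [hadd, hsmul] at hAiB
      simp only [conjTranspose_add, conjTranspose_smul, Matrix.add_mul, Matrix.mul_add,
        Matrix.smul_mul, Matrix.mul_smul, hadd, hsmul, smul_smul] at hAiB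
      simp only [smul_add, smul_sub, smul_smul, Complex.star_def, Complex.conj_I,
        neg_mul, Complex.I_mul_I, neg_neg, one_smul, neg_smul, smul_neg] at hAiB
      rw [key A, key B] at hAiB
      have E1 : q (Aᴴ * B) + q (Bᴴ * A) = (q A)ᴴ * q B + (q B)ᴴ * q A := by
        linear_combination (norm := abel1) hAB
      have E2 : Complex.I • q (Aᴴ * B) - Complex.I • q (Bᴴ * A)
          = Complex.I • ((q A)ᴴ * q B) - Complex.I • ((q B)ᴴ * q A) := by
        linear_combination (norm := abel1) hAiB
      exact polar_aux _ _ _ _ _ E1 E2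
    have hmul : ∀ A B, q (A * B) = q A * q B := by
      intro A B
      have h := key2 Aᴴ B
      rw [conjTranspose_conjTranspose, ← hstar, conjTranspose_conjTranspose] at h
      exact h
    refine ⟨?_, hmul⟩
    let L : Matrix (Fin n) (Fin n) ℂ →ₗ[ℂ] Matrix (Fin n) (Fin n) ℂ :=
      { toFun := q, map_add' := hadd, map_smul' := hsmul }
    have hinj : Function.Injective L := by
      rw [← LinearMap.ker_eq_bot, LinearMap.ker_eq_bot']
      intro A hA
      have hA' : q A = 0 := hA
      have h0 : Matrix.trace (Aᴴ * A) = 0 := by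
        rw [← hiso A, hA']
        simp
      exact aux_trace_zero A h0
    exact ⟨hinj, LinearMap.injective_iff_surjective.mp hinj⟩
  · rintro ⟨-, hmul⟩ A
    rw [hstar, ← hmul, htr]
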